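/- The map replacing some peaks (factors 'ud') of a Dyck path by horizontal steps gives a bijection between Schröder paths of semilength n with k horizontal steps and pairs (Dyck path of semilength n, choice of k peaks of that path). -/

import Mathlib

inductive SStep : Type
  | U : SStep
  | D : SStep
  | H : SStep
deriving DecidableEq

def SStep.hdiff : SStep → ℤ
  | .U => 1
  | .D => -1
  | .H => 0

def SStep.hlen : SStep → ℕ
  | .U => 1
  | .D => 1
  | .H => 2

/-- A Schröder path of semilength `n`. -/
def IsSchroeder (n : ℕ) (p : List SStep) : Prop :=
  (p.map SStep.hlen).sum = 2 * n ∧ (p.map SStep.hdiff).sum = 0 ∧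
    ∀ q : List SStep, q <+: p → 0 ≤ (q.map SStep.hdiff).sum

/-- The set of peak positions of a path: indices `i` with `pᵢ = u`, `pᵢ₊₁ = d`. -/
def peaks (p : List SStep) : Finset ℕ :=
  (Finset.range p.length).filter
    (fun i => p.getD i SStep.D = SStep.U ∧ p.getD (i + 1) SStep.U = SStep.D)

/-! ### Auxiliary definitions -/

/-- Replace each `H` by `U D`. -/
def expand : List SStep → List SStep
  | [] => []
  | .H :: t => .U :: .D :: expand t
  | .U :: t => .U :: expand t
  | .D :: t => .D :: expand t

/-- The positions (in the expanded path) of the `H` steps. -/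
def marks : List SStep → Finset ℕ
  | [] => ∅
  | .H :: t => insert 0 ((marks t).image (· + 2))
  | .U :: t => (marks t).image (· + 1)
  | .D :: t => (marks t).image (· + 1)

lemma image_sub_add (S : Finset ℕ) (m : ℕ) (h : ∀ j ∈ S, m ≤ j) :
    (S.image (· - m)).image (· + m) = S := by
  ext j
  simp only [Finset.mem_image]
  constructor
  · rintro ⟨i, ⟨x, hx, rfl⟩, rfl⟩
    simpa [Nat.sub_add_cancel (h x hx)] using hx
  · intro hj
    exact ⟨j - m, ⟨j, hj, rfl⟩, Nat.sub_add_cancel (h j hj)⟩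

lemma hlen_expand (p : List SStep) :
    ((expand p).map SStep.hlen).sum = (p.map SStep.hlen).sum := by
  induction p with
  | nil => rfl
  | cons s t ih => cases s <;> simp [expand, SStep.hlen, ih] <;> omega

lemma hdiff_expand (p : List SStep) :
    ((expand p).map SStep.hdiff).sum = (p.map SStep.hdiff).sum := by
  induction p with
  | nil => rfl
  | cons s t ih => cases s <;> simp [expand, SStep.hdiff, ih] <;> omega

lemma expand_append (p q : List SStep) :
    expand (p ++ q) = expand p ++ expand q := by
  induction p with
  | nil => rfl
  | cons s t ih => cases s <;> simp [expand, ih]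

lemma expand_prefix {p q : List SStep} (h : q <+: p) : expand q <+: expand p := by
  obtain ⟨r, rfl⟩ := h
  rw [expand_append]
  exact List.prefix_append _ _

lemma count_H_expand (p : List SStep) : (expand p).count SStep.H = 0 := by
  induction p with
  | nil => rfl
  | cons s t ih => cases s <;> simp [expand, List.count_cons, ih]

lemma prefix_expand_exists :
    ∀ (p r : List SStep), r <+: expand p →
      ∃ q, q <+: p ∧ (r = expand q ∨ r = expand q ++ [SStep.U]) := by
  intro p
  induction p with
  | nil =>
    intro r hr
    rw [show expand [] = [] from rfl, List.prefix_nil] at hr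
    exact ⟨[], List.nil_prefix, Or.inl hr⟩
  | cons s t ih =>
    intro r hr
    cases s with
    | U =>
      rcases r with _ | ⟨a, r'⟩
      · exact ⟨[], List.nil_prefix, Or.inl rfl⟩
      · rw [show expand (.U :: t) = .U :: expand t from rfl, List.cons_prefix_cons] at hr
        obtain ⟨rfl, hr'⟩ := hr
        obtain ⟨q, hq, h | h⟩ := ih r' hr'
        · exact ⟨.U :: q, List.cons_prefix_cons.mpr ⟨rfl, hq⟩, Or.inl (by simp [expand, h])⟩
        · exact ⟨.U :: q, List.cons_prefix_cons.mpr ⟨rfl, hq⟩, Or.inr (by simp [expand, h])⟩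
    | D =>
      rcases r with _ | ⟨a, r'⟩
      · exact ⟨[], List.nil_prefix, Or.inl rfl⟩
      · rw [show expand (.D :: t) = .D :: expand t from rfl, List.cons_prefix_cons] at hr
        obtain ⟨rfl, hr'⟩ := hr
        obtain ⟨q, hq, h | h⟩ := ih r' hr'
        · exact ⟨.D :: q, List.cons_prefix_cons.mpr ⟨rfl, hq⟩, Or.inl (by simp [expand, h])⟩
        · exact ⟨.D :: q, List.cons_prefix_cons.mpr ⟨rfl, hq⟩, Or.inr (by simp [expand, h])⟩
    | H =>
      rcases r with _ | ⟨a, r'⟩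
      · exact ⟨[], List.nil_prefix, Or.inl rfl⟩
      · rw [show expand (.H :: t) = .U :: .D :: expand t from rfl,
          List.cons_prefix_cons] at hr
        obtain ⟨rfl, hr'⟩ := hr
        rcases r' with _ | ⟨b, r''⟩
        · exact ⟨[], List.nil_prefix, Or.inr rfl⟩
        · rw [List.cons_prefix_cons] at hr'
          obtain ⟨rfl, hr''⟩ := hr'
          obtain ⟨q, hq, h | h⟩ := ih r'' hr''
          · exact ⟨.H :: q, List.cons_prefix_cons.mpr ⟨rfl, hq⟩, Or.inl (by simp [expand, h])⟩
          · exact ⟨.H :: q, List.cons_prefix_cons.mpr ⟨rfl, hq⟩, Or.inr (by simp [expand, h])⟩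

lemma isSchroeder_expand {n : ℕ} {p : List SStep} (h : IsSchroeder n p) :
    IsSchroeder n (expand p) := by
  obtain ⟨h1, h2, h3⟩ := h
  refine ⟨by rw [hlen_expand]; exact h1, by rw [hdiff_expand]; exact h2, ?_⟩
  intro r hr
  obtain ⟨q, hq, h | h⟩ := prefix_expand_exists p r hr
  · rw [h, hdiff_expand]; exact h3 q hq
  · have := h3 q hq
    rw [h]
    simp only [List.map_append, List.sum_append, hdiff_expand]
    simp [SStep.hdiff]
    omega

lemma isSchroeder_of_expand {n : ℕ} {p : List SStep} (h : IsSchroeder n (expand p)) :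
    IsSchroeder n p := by
  obtain ⟨h1, h2, h3⟩ := h
  refine ⟨by rw [← hlen_expand]; exact h1, by rw [← hdiff_expand]; exact h2, ?_⟩
  intro q hq
  have := h3 (expand q) (expand_prefix hq)
  rwa [hdiff_expand] at this

lemma mem_peaks_cons {s : SStep} {l : List SStep} {i : ℕ} :
    i + 1 ∈ peaks (s :: l) ↔ i ∈ peaks l := by
  simp [peaks, List.getD_cons_succ, Nat.add_lt_add_iff_right]

lemma zero_mem_peaks_cons (l : List SStep) : 0 ∈ peaks (SStep.U :: SStep.D :: l) := by
  simp only [peaks, Finset.mem_filter, Finset.mem_range]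
  exact ⟨by simp, by simp, by simp⟩

lemma marks_subset_peaks (p : List SStep) : marks p ⊆ peaks (expand p) := by
  induction p with
  | nil => simp [marks]
  | cons s t ih =>
    cases s with
    | U =>
      intro i hi
      simp only [marks, Finset.mem_image] at hi
      obtain ⟨j, hj, rfl⟩ := hi
      exact mem_peaks_cons.mpr (ih hj)
    | D =>
      intro i hi
      simp only [marks, Finset.mem_image] at hi
      obtain ⟨j, hj, rfl⟩ := hi
      exact mem_peaks_cons.mpr (ih hj)
    | H =>
      intro i hi
      simp only [marks, Finset.mem_insert, Finset.mem_image] at hi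
      rcases hi with rfl | ⟨j, hj, rfl⟩
      · exact zero_mem_peaks_cons _
      · show j + 2 ∈ peaks (.U :: .D :: expand t)
        have : j + 2 = (j + 1) + 1 := by omega
        rw [this, mem_peaks_cons, mem_peaks_cons]
        exact ih hj

lemma card_marks (p : List SStep) : (marks p).card = p.count SStep.H := by
  induction p with
  | nil => rfl
  | cons s t ih =>
    cases s with
    | U => simpa [marks, List.count_cons,
        Finset.card_image_of_injective _ (add_left_injective 1)] using ih
    | D => simpa [marks, List.count_cons,
        Finset.card_image_of_injective _ (add_left_injective 1)] using ih
    | H =>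
      have h0 : (0 : ℕ) ∉ (marks t).image (· + 2) := by simp
      simp [marks, List.count_cons, Finset.card_insert_of_notMem h0,
        Finset.card_image_of_injective _ (add_left_injective 2), ih]

lemma expand_marks_inj : ∀ p p' : List SStep,
    expand p = expand p' → marks p = marks p' → p = p' := by
  intro p
  induction p with
  | nil =>
    intro p' he _
    cases p' with
    | nil => rfl
    | cons s t => cases s <;> simp [expand] at he
  | cons s t ih =>
    intro p' he hm
    cases p' with
    | nil => cases s <;> simp [expand] at he
    | cons s' t' =>
      cases s <;> cases s' <;> simp only [expand, List.cons.injEq] at he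
      · -- U U
        rw [ih t' he.2 (Finset.image_injective (add_left_injective 1) hm)]
      · -- U D
        exact absurd he.1 (by simp)
      · -- U H : marks differ at 0
        exfalso
        have h0 : (0 : ℕ) ∈ marks (.H :: t') := by simp [marks]
        rw [← hm] at h0
        simp [marks] at h0
      · -- D U
        exact absurd he.1 (by simp)
      · -- D D
        rw [ih t' he.2 (Finset.image_injective (add_left_injective 1) hm)]
      · -- D H
        exact absurd he.1 (by simp)
      · -- H U
        exfalso
        have h0 : (0 : ℕ) ∈ marks (.H :: t) := by simp [marks]
        rw [hm] at h0
        simp [marks] at h0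
      · -- H D
        exact absurd he.1 (by simp)
      · -- H H
        have he' : expand t = expand t' := he.2.2
        have h0 : (0 : ℕ) ∉ (marks t).image (· + 2) := by simp
        have h0' : (0 : ℕ) ∉ (marks t').image (· + 2) := by simp
        have himg : (marks t).image (· + 2) = (marks t').image (· + 2) := by
          have := congrArg (fun S => S.erase 0) hm
          simpa [marks, Finset.erase_insert h0, Finset.erase_insert h0'] using this
        rw [ih t' he' (Finset.image_injective (add_left_injective 2) himg)]

lemma contract_exists : ∀ (N : ℕ) (d : List SStep), d.length ≤ N →
    d.count SStep.H = 0 → ∀ S : Finset ℕ, S ⊆ peaks d →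
    ∃ p, expand p = d ∧ marks p = S := by
  intro N
  induction N with
  | zero =>
    intro d hlen _ S hS
    rw [Nat.le_zero, List.length_eq_zero_iff] at hlen
    subst hlen
    have : S = ∅ := Finset.subset_empty.mp (by simpa [peaks] using hS)
    exact ⟨[], rfl, by simp [marks, this]⟩
  | succ N ih =>
    intro d hlen hc S hS
    cases d with
    | nil =>
      have : S = ∅ := Finset.subset_empty.mp (by simpa [peaks] using hS)
      exact ⟨[], rfl, by simp [marks, this]⟩
    | cons s t =>
      by_cases h0 : 0 ∈ S
      · -- the head is a chosen peak: `d = U :: D :: t'`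
        have hp0 := hS h0
        simp only [peaks, Finset.mem_filter, Finset.mem_range] at hp0
        obtain ⟨-, hg0, hg1⟩ := hp0
        have hsU : s = SStep.U := by simpa using hg0
        subst hsU
        cases t with
        | nil => simp [List.getD] at hg1
        | cons x t' =>
          have hxD : x = SStep.D := by simpa [List.getD] using hg1
          subst hxD
          have hc' : t'.count SStep.H = 0 := by
            simpa [List.count_cons] using hc
          have hge2 : ∀ j ∈ S.erase 0, 2 ≤ j := by
            intro j hj
            obtain ⟨hj0, hjS⟩ := Finset.mem_erase.mp hj
            by_contra hlt
            have hj1 : j = 1 := by omega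
            subst hj1
            have := hS hjS
            simp only [peaks, Finset.mem_filter] at this
            exact absurd this.2.1 (by simp)
          set S' : Finset ℕ := (S.erase 0).image (· - 2) with hS'
          have hsub' : S' ⊆ peaks t' := by
            intro i hi
            simp only [hS', Finset.mem_image] at hi
            obtain ⟨j, hj, rfl⟩ := hi
            have h2 := hge2 j hj
            have hjS : j ∈ peaks (.U :: .D :: t') := hS (Finset.mem_erase.mp hj).2
            have hj2 : j = (j - 2) + 1 + 1 := by omega
            rw [hj2, mem_peaks_cons, mem_peaks_cons] at hjS
            exact hjS
          obtain ⟨p', hp1, hp2⟩ := ih t' (by simp at hlen ⊢; omega) hc' S' hsub'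
          refine ⟨.H :: p', by simp [expand, hp1], ?_⟩
          rw [show marks (.H :: p') = insert 0 ((marks p').image (· + 2)) from rfl,
            hp2, hS', image_sub_add _ _ hge2, Finset.insert_erase h0]
      · -- the head is not a chosen peak
        have hc' : t.count SStep.H = 0 ∧ s ≠ SStep.H := by
          constructor
          · cases s <;> simp_all [List.count_cons]
          · intro hs; subst hs; simp [List.count_cons] at hc
        have hge1 : ∀ j ∈ S, 1 ≤ j := by
          intro j hj
          rcases Nat.eq_zero_or_pos j with rfl | h
          · exact absurd hj h0
          · exact h
        set S' : Finset ℕ := S.image (· - 1) with hS'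
        have hsub' : S' ⊆ peaks t := by
          intro i hi
          simp only [hS', Finset.mem_image] at hi
          obtain ⟨j, hj, rfl⟩ := hi
          have h1 := hge1 j hj
          have hjS : j ∈ peaks (s :: t) := hS hj
          have hj1 : j = (j - 1) + 1 := by omega
          rw [hj1, mem_peaks_cons] at hjS
          exact hjS
        obtain ⟨p', hp1, hp2⟩ := ih t (by simp at hlen ⊢; omega) hc'.1 S' hsub'
        cases s with
        | U =>
          refine ⟨.U :: p', by simp [expand, hp1], ?_⟩
          rw [show marks (.U :: p') = (marks p').image (· + 1) from rfl, hp2, hS',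
            image_sub_add _ _ hge1]
        | D =>
          refine ⟨.D :: p', by simp [expand, hp1], ?_⟩
          rw [show marks (.D :: p') = (marks p').image (· + 1) from rfl, hp2, hS',
            image_sub_add _ _ hge1]
        | H => exact absurd rfl hc'.2

lemma forward_prop {n k : ℕ} {p : List SStep}
    (h : IsSchroeder n p ∧ p.count SStep.H = k) :
    IsSchroeder n (expand p) ∧ (expand p).count SStep.H = 0 ∧
      marks p ⊆ peaks (expand p) ∧ (marks p).card = k :=
  ⟨isSchroeder_expand h.1, count_H_expand p, marks_subset_peaks p,
    by rw [card_marks]; exact h.2⟩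

/-- Replacing chosen peaks `ud` of a Dyck path by horizontal steps is a bijection
between Schröder paths of semilength `n` with `k` horizontal steps and pairs
(Dyck path of semilength `n`, set of `k` of its peaks). -/
theorem schroeder_dyck_peaks_bijection (n k : ℕ) :
    Nonempty
      ({p : List SStep // IsSchroeder n p ∧ p.count SStep.H = k} ≃
        {pd : List SStep × Finset ℕ //
          IsSchroeder n pd.1 ∧ pd.1.count SStep.H = 0 ∧
          pd.2 ⊆ peaks pd.1 ∧ pd.2.card = k}) := by
  refine ⟨Equiv.ofBijective (fun p => ⟨(expand p.1, marks p.1), forward_prop p.2⟩) ⟨?_, ?_⟩⟩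
  · rintro ⟨p, hp⟩ ⟨q, hq⟩ h
    simp only [Subtype.mk.injEq, Prod.mk.injEq] at h
    exact Subtype.ext (expand_marks_inj p q h.1 h.2)
  · rintro ⟨⟨d, S⟩, hd, hH, hsub, hcard⟩
    obtain ⟨p, hpe, hpm⟩ := contract_exists d.length d le_rfl hH S hsub
    subst hpe
    refine ⟨⟨p, isSchroeder_of_expand hd, ?_⟩, ?_⟩
    · rw [← card_marks, hpm]; exact hcard
    · exact Subtype.ext (by simp [hpm])
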